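/- Let T be a rooted tree whose root's children are roots of subtrees T_1,...,T_m, and let T_k' denote the rooted tree consisting of the root of T joined to T_k. Then the pruning lattice of T is isomorphic to the product of the pruning lattices of the T_k', and the pruning lattice of T_k' is isomorphic to the pruning lattice of T_k with a new minimum element adjoined. -/

import Mathlib

/-- Finite rooted trees: a node together with the list of subtrees at its children. -/
inductive RTree where
  | node : List RTree → RTree

namespace RTree

/-- Valid positions (vertices) of a rooted tree, encoded as paths of child indices
from the root. -/
def IsPos : RTree → List ℕ → Prop
  | _, [] => True
  | node ts, i :: l => ∃ h : i < ts.length, IsPos (ts.get ⟨i, h⟩) l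
decreasing_by
  all_goals
    simp only [RTree.node.sizeOf_spec]
    first
      | (have := List.sizeOf_lt_of_mem (List.get_mem ts ⟨i, h⟩); omega)
      | (have := List.sizeOf_lt_of_mem (List.getElem_mem (l := ts) h); simp_all; omega)
      | (have := List.sizeOf_lt_of_mem (List.getElem_mem (l := ts) h); simp only [List.get_eq_getElem]; omega)

/-- A pruning of a rooted tree `T`: a set of vertices of `T` containing the root and
closed under taking ancestors (prefixes).  Prunings are ordered by inclusion, which is
the same as inclusion of their edge sets. -/
structure Pruning (T : RTree) where
  verts : Set (List ℕ)
  root_mem : [] ∈ verts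
  valid : ∀ l ∈ verts, IsPos T l
  downClosed : ∀ l₁ l₂ : List ℕ, l₁ <+: l₂ → l₂ ∈ verts → l₁ ∈ verts

instance (T : RTree) : PartialOrder (Pruning T) where
  le a b := a.verts ⊆ b.verts
  le_refl a := subset_rfl
  le_trans a b c hab hbc := Set.Subset.trans hab hbc
  le_antisymm a b hab hba := by
    cases a; cases b; simp only [Pruning.mk.injEq]; exact subset_antisymm hab hba

theorem Pruning.ext' {T : RTree} {a b : Pruning T} (h : a.verts = b.verts) : a = b := by
  cases a; cases b; simpa using h

theorem isPos_nil (T : RTree) : IsPos T [] := by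
  cases T; rw [IsPos]; trivial

theorem isPos_cons {ts : List RTree} {i : ℕ} {l : List ℕ} :
    IsPos (node ts) (i :: l) ↔ ∃ h : i < ts.length, IsPos (ts.get ⟨i, h⟩) l := by
  rw [IsPos]

/-- The `i`-th component of a pruning of `node ts`. -/
def splitP {ts : List RTree} (P : Pruning (node ts)) (i : Fin ts.length) :
    Pruning (node [ts.get i]) where
  verts := {m | m = [] ∨ ∃ l, m = 0 :: l ∧ ((i : ℕ) :: l) ∈ P.verts}
  root_mem := Or.inl rfl
  valid := by
    rintro m (rfl | ⟨l, rfl, hl⟩)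
    · exact isPos_nil _
    · obtain ⟨h, hpos⟩ := isPos_cons.mp (P.valid _ hl)
      refine isPos_cons.mpr ⟨by simp, ?_⟩
      simpa [Fin.eta] using hpos
  downClosed := by
    rintro l₁ l₂ hpre (rfl | ⟨l, rfl, hl⟩)
    · left; exact List.prefix_nil.mp hpre
    · rcases l₁ with _ | ⟨a, l₁⟩
      · exact Or.inl rfl
      · obtain ⟨rfl, hpre'⟩ := List.cons_prefix_cons.mp hpre
        exact Or.inr ⟨l₁, rfl, P.downClosed _ _ (List.cons_prefix_cons.mpr ⟨rfl, hpre'⟩) hl⟩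

/-- Assembling a pruning of `node ts` from components. -/
def joinP {ts : List RTree} (f : ∀ i : Fin ts.length, Pruning (node [ts.get i])) :
    Pruning (node ts) where
  verts := {m | m = [] ∨ ∃ (i : Fin ts.length) (l : List ℕ),
      m = (i : ℕ) :: l ∧ (0 :: l) ∈ (f i).verts}
  root_mem := Or.inl rfl
  valid := by
    rintro m (rfl | ⟨i, l, rfl, hl⟩)
    · exact isPos_nil _
    · obtain ⟨h, hpos⟩ := isPos_cons.mp ((f i).valid _ hl)
      exact isPos_cons.mpr ⟨i.isLt, by simpa [Fin.eta] using hpos⟩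
  downClosed := by
    rintro l₁ l₂ hpre (rfl | ⟨i, l, rfl, hl⟩)
    · left; exact List.prefix_nil.mp hpre
    · rcases l₁ with _ | ⟨a, l₁⟩
      · exact Or.inl rfl
      · obtain ⟨rfl, hpre'⟩ := List.cons_prefix_cons.mp hpre
        exact Or.inr ⟨i, l₁, rfl,
          (f i).downClosed _ _ (List.cons_prefix_cons.mpr ⟨rfl, hpre'⟩) hl⟩

/-- The pruning of `node [t]` corresponding to an element of `WithBot (Pruning t)`. -/
def fromW {t : RTree} : WithBot (Pruning t) → Pruning (node [t])
  | ⊥ => { verts := {m | m = []}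
           root_mem := rfl
           valid := by rintro m rfl; exact isPos_nil _
           downClosed := by rintro l₁ l₂ hpre rfl; exact List.prefix_nil.mp hpre }
  | (Q : Pruning t) =>
    { verts := {m | m = [] ∨ ∃ l, m = 0 :: l ∧ l ∈ Q.verts}
      root_mem := Or.inl rfl
      valid := by
        rintro m (rfl | ⟨l, rfl, hl⟩)
        · exact isPos_nil _
        · exact isPos_cons.mpr ⟨by simp, Q.valid _ hl⟩
      downClosed := by
        rintro l₁ l₂ hpre (rfl | ⟨l, rfl, hl⟩)
        · left; exact List.prefix_nil.mp hpre
        · rcases l₁ with _ | ⟨a, l₁⟩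
          · exact Or.inl rfl
          · obtain ⟨rfl, hpre'⟩ := List.cons_prefix_cons.mp hpre
            exact Or.inr ⟨l₁, rfl, Q.downClosed _ _ hpre' hl⟩ }

open Classical in
/-- The element of `WithBot (Pruning t)` corresponding to a pruning of `node [t]`. -/
noncomputable def toW {t : RTree} (P : Pruning (node [t])) : WithBot (Pruning t) :=
  if h : [0] ∈ P.verts then
    (⟨{l | 0 :: l ∈ P.verts}, h,
      fun l hl => by
        obtain ⟨h0, hpos⟩ := isPos_cons.mp (P.valid _ hl); exact hpos,
      fun l₁ l₂ hpre h₂ =>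
        P.downClosed _ _ (List.cons_prefix_cons.mpr ⟨rfl, hpre⟩) h₂⟩ : Pruning t)
  else ⊥

theorem mem_node_singleton {t : RTree} (P : Pruning (node [t])) {a : ℕ} {l : List ℕ}
    (h : a :: l ∈ P.verts) : a = 0 := by
  obtain ⟨h0, -⟩ := isPos_cons.mp (P.valid _ h)
  simp only [List.length_cons, List.length_nil] at h0
  omega

theorem stmt9 (ts : List RTree) :
    Nonempty (RTree.Pruning (RTree.node ts)
        ≃o ∀ i : Fin ts.length, RTree.Pruning (RTree.node [ts.get i]))
    ∧ ∀ t : RTree, Nonempty (RTree.Pruning (RTree.node [t]) ≃o WithBot (RTree.Pruning t)) := by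
  constructor
  · refine ⟨⟨⟨splitP, joinP, ?_, ?_⟩, ?_⟩⟩
    · intro P
      apply Pruning.ext'
      ext m
      simp only [joinP, splitP, Set.mem_setOf_eq]
      constructor
      · rintro (rfl | ⟨i, l, rfl, (h | ⟨l', hl', hmem⟩)⟩)
        · exact P.root_mem
        · exact absurd h (by simp)
        · obtain rfl : l = l' := by injection hl'
          exact hmem
      · intro hm
        rcases m with _ | ⟨a, l⟩
        · exact Or.inl rfl
        · obtain ⟨ha, -⟩ := isPos_cons.mp (P.valid _ hm)
          exact Or.inr ⟨⟨a, ha⟩, l, rfl, Or.inr ⟨l, rfl, hm⟩⟩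
    · intro f
      funext i
      apply Pruning.ext'
      ext m
      simp only [splitP, joinP, Set.mem_setOf_eq]
      constructor
      · rintro (rfl | ⟨l, rfl, (h | ⟨j, l', hl', hmem⟩)⟩)
        · exact (f i).root_mem
        · exact absurd h (by simp)
        · obtain ⟨hij, rfl⟩ : (i : ℕ) = (j : ℕ) ∧ l = l' := by
            constructor <;> injection hl'
          obtain rfl : i = j := Fin.ext hij
          exact hmem
      · intro hm
        rcases m with _ | ⟨a, l⟩
        · exact Or.inl rfl
        · have ha := mem_node_singleton (f i) hm
          subst ha
          exact Or.inr ⟨l, rfl, Or.inr ⟨i, l, rfl, hm⟩⟩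
    · intro P Q
      constructor
      · intro h m hm
        rcases m with _ | ⟨a, l⟩
        · exact Q.root_mem
        · obtain ⟨ha, -⟩ := isPos_cons.mp (P.valid _ hm)
          have := h (i := ⟨a, ha⟩) (Or.inr ⟨l, rfl, hm⟩)
          rcases this with h' | ⟨l', hl', hmem⟩
          · exact absurd h' (by simp)
          · obtain rfl : l = l' := by injection hl'
            exact hmem
      · intro h i m hm
        rcases hm with rfl | ⟨l, rfl, hmem⟩
        · exact Or.inl rfl
        · exact Or.inr ⟨l, rfl, h hmem⟩
  · intro t
    refine ⟨OrderIso.symm (⟨⟨fromW, toW, ?_, ?_⟩, ?_⟩ :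
      WithBot (Pruning t) ≃o Pruning (node [t]))⟩
    · intro x
      induction x using WithBot.recBotCoe with
      | bot =>
        rw [toW, dif_neg]
        simp [fromW, Set.mem_setOf_eq]
      | coe Q =>
        have h0 : [0] ∈ (fromW (t := t) Q).verts := Or.inr ⟨[], rfl, Q.root_mem⟩
        rw [toW, dif_pos h0]
        congr 1
        apply Pruning.ext'
        ext l
        simp only [Set.mem_setOf_eq, fromW]
        constructor
        · rintro (h | ⟨l', hl', hmem⟩)
          · exact absurd h (by simp)
          · obtain rfl : l = l' := by injection hl'
            exact hmem
        · intro h; exact Or.inr ⟨l, rfl, h⟩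
    · intro P
      by_cases h : [0] ∈ P.verts
      · rw [toW, dif_pos h]
        apply Pruning.ext'
        ext m
        simp only [fromW, Set.mem_setOf_eq]
        constructor
        · rintro (rfl | ⟨l, rfl, hmem⟩)
          · exact P.root_mem
          · exact hmem
        · intro hm
          rcases m with _ | ⟨a, l⟩
          · exact Or.inl rfl
          · have ha := mem_node_singleton P hm
            subst ha
            exact Or.inr ⟨l, rfl, hm⟩
      · rw [toW, dif_neg h]
        apply Pruning.ext'
        ext m
        simp only [fromW, Set.mem_setOf_eq]
        constructor
        · rintro rfl; exact P.root_mem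
        · intro hm
          rcases m with _ | ⟨a, l⟩
          · rfl
          · have ha := mem_node_singleton P hm
            subst ha
            exact absurd (P.downClosed [0] (0 :: l) ⟨l, rfl⟩ hm) h
    · intro x y
      induction x using WithBot.recBotCoe with
      | bot =>
        simp only [bot_le, iff_true]
        rintro m rfl
        exact (fromW y).root_mem
      | coe Q =>
        induction y using WithBot.recBotCoe with
        | bot =>
          constructor
          · intro h
            have := h (a := [0]) (Or.inr ⟨[], rfl, Q.root_mem⟩)
            exact absurd this (by simp [fromW])
          · intro h
            exact absurd h (by simp)
        | coe Q' =>
          rw [WithBot.coe_le_coe]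
          constructor
          · intro h l hl
            have := h (a := 0 :: l) (Or.inr ⟨l, rfl, hl⟩)
            rcases this with h' | ⟨l', hl', hmem⟩
            · exact absurd h' (by simp)
            · obtain rfl : l = l' := by injection hl'
              exact hmem
          · rintro h m (rfl | ⟨l, rfl, hmem⟩)
            · exact Or.inl rfl
            · exact Or.inr ⟨l, rfl, h hmem⟩

end RTree
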